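/- If H is the disjoint union of two complete graphs K_{m₁} and K_{m₂} with m₁, m₂ ≥ 1, then ψ(H) = max{m₁, m₂}. -/
import Mathlib


open SimpleGraph

/-- A coloring of the vertices with colors `0, ..., k-1` which uses all `k` colors and such
that every pair of distinct colors appears on the endpoints of some edge. -/
def IsCompleteColoring {V : Type*} (G : SimpleGraph V) (c : V → ℕ) (k : ℕ) : Prop :=
  (∀ v, c v < k) ∧ (∀ i, i < k → ∃ v, c v = i) ∧
    ∀ i j, i < k → j < k → i ≠ j → ∃ u w, G.Adj u w ∧ c u = i ∧ c w = j

/-- A proper coloring: adjacent vertices get distinct colors. -/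
def IsProperColoring {V : Type*} (G : SimpleGraph V) (c : V → ℕ) : Prop :=
  ∀ u w, G.Adj u w → c u ≠ c w

/-- A Grundy coloring with `k` colors: proper, uses all `k` colors, and every vertex of
color `j` has, for each `i < j`, a neighbor colored `i`. -/
def IsGrundyColoring {V : Type*} (G : SimpleGraph V) (c : V → ℕ) (k : ℕ) : Prop :=
  (∀ v, c v < k) ∧ (∀ i, i < k → ∃ v, c v = i) ∧ IsProperColoring G c ∧
    ∀ v i, i < c v → ∃ u, G.Adj u v ∧ c u = i

/-- The pseudoachromatic number `ψ`. -/
noncomputable def pseudoachromaticNumber {V : Type*} (G : SimpleGraph V) : ℕ :=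
  sSup {k | ∃ c, IsCompleteColoring G c k}

/-- The achromatic number `α`. -/
noncomputable def achromaticNumber {V : Type*} (G : SimpleGraph V) : ℕ :=
  sSup {k | ∃ c, IsCompleteColoring G c k ∧ IsProperColoring G c}

/-- The Grundy number `Γ`. -/
noncomputable def grundyNumber {V : Type*} (G : SimpleGraph V) : ℕ :=
  sSup {k | ∃ c, IsGrundyColoring G c k}

/-- The chromatic number `χ` (as a natural number). -/
noncomputable def chromNumber {V : Type*} (G : SimpleGraph V) : ℕ :=
  sInf {k | ∃ c : V → ℕ, (∀ v, c v < k) ∧ IsProperColoring G c}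

/-- The clique number `ω`. -/
noncomputable def cliqueNumber {V : Type*} (G : SimpleGraph V) : ℕ :=
  sSup {n | ∃ s : Finset V, G.IsNClique n s}

/-- `G` is `H`-free: no induced subgraph of `G` is isomorphic to `H`. -/
def GraphFree {V W : Type*} (G : SimpleGraph V) (H : SimpleGraph W) : Prop :=
  ∀ s : Set V, IsEmpty ((G.induce s) ≃g H)

/-- `G` is `ωψ`-perfect. -/
def OmegaPsiPerfect {V : Type*} (G : SimpleGraph V) : Prop :=
  ∀ s : Set V, cliqueNumber (G.induce s) = pseudoachromaticNumber (G.induce s)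

/-- `G` is `χψ`-perfect. -/
def ChiPsiPerfect {V : Type*} (G : SimpleGraph V) : Prop :=
  ∀ s : Set V, chromNumber (G.induce s) = pseudoachromaticNumber (G.induce s)

/-- The path on 4 vertices. -/
def pathP4 : SimpleGraph (Fin 4) :=
  SimpleGraph.fromRel (fun a b => (b : ℕ) = (a : ℕ) + 1)

/-- The cycle on 4 vertices. -/
def cycleC4 : SimpleGraph (Fin 4) :=
  SimpleGraph.fromRel (fun a b => b = a + 1)

/-- The disjoint union of a path on 3 vertices and an edge. -/
def graphP3K2 : SimpleGraph (Fin 5) :=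
  SimpleGraph.fromRel (fun a b => (a, b) ∈ [((0 : Fin 5), (1 : Fin 5)), (1, 2), (3, 4)])

/-- The disjoint union of three edges. -/
def graph3K2 : SimpleGraph (Fin 6) :=
  SimpleGraph.fromRel (fun a b => (a, b) ∈ [((0 : Fin 6), (1 : Fin 6)), (2, 3), (4, 5)])

/-- The join of two graphs. -/
def graphJoin {V W : Type*} (G : SimpleGraph V) (H : SimpleGraph W) : SimpleGraph (V ⊕ W) :=
  SimpleGraph.fromRel (fun x y =>
    match x, y with
    | Sum.inl a, Sum.inl b => G.Adj a b
    | Sum.inr a, Sum.inr b => H.Adj a b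
    | _, _ => True)

/-- The disjoint union of two graphs. -/
def graphSum {V W : Type*} (G : SimpleGraph V) (H : SimpleGraph W) : SimpleGraph (V ⊕ W) :=
  SimpleGraph.fromRel (fun x y =>
    match x, y with
    | Sum.inl a, Sum.inl b => G.Adj a b
    | Sum.inr a, Sum.inr b => H.Adj a b
    | _, _ => False)

/-- The disjoint union of a family of graphs. -/
def graphSigma {ι : Type} {U : ι → Type} (f : ∀ i, SimpleGraph (U i)) :
    SimpleGraph (Σ i, U i) :=
  SimpleGraph.fromRel (fun x y => ∃ h : x.1 = y.1, (f y.1).Adj (h ▸ x.2) y.2)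

lemma graphSum_complete_adj (m₁ m₂ : ℕ) (u w : Fin m₁ ⊕ Fin m₂) :
    (graphSum (completeGraph (Fin m₁)) (completeGraph (Fin m₂))).Adj u w ↔
      (∃ a b : Fin m₁, u = Sum.inl a ∧ w = Sum.inl b ∧ a ≠ b) ∨
      (∃ a b : Fin m₂, u = Sum.inr a ∧ w = Sum.inr b ∧ a ≠ b) := by
  cases u with
  | inl a =>
    cases w with
    | inl b =>
      simp only [graphSum, SimpleGraph.fromRel_adj, completeGraph, top_adj]
      constructor
      · rintro ⟨hne, _⟩
        exact Or.inl ⟨a, b, rfl, rfl, fun h => hne (by rw [h])⟩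
      · rintro (⟨a', b', ha, hb, hab⟩ | ⟨a', b', ha, hb, hab⟩)
        · cases ha; cases hb
          exact ⟨fun h => hab (Sum.inl.inj h), Or.inl hab⟩
        · cases ha
    | inr b => simp [graphSum, SimpleGraph.fromRel_adj]
  | inr a =>
    cases w with
    | inl b => simp [graphSum, SimpleGraph.fromRel_adj]
    | inr b =>
      simp only [graphSum, SimpleGraph.fromRel_adj, completeGraph, top_adj]
      constructor
      · rintro ⟨hne, _⟩
        exact Or.inr ⟨a, b, rfl, rfl, fun h => hne (by rw [h])⟩
      · rintro (⟨a', b', ha, hb, hab⟩ | ⟨a', b', ha, hb, hab⟩)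
        · cases ha
        · cases ha; cases hb
          exact ⟨fun h => hab (Sum.inr.inj h), Or.inl hab⟩

theorem stmt_9 (m₁ m₂ : ℕ) (h₁ : 1 ≤ m₁) (h₂ : 1 ≤ m₂) :
    pseudoachromaticNumber (graphSum (completeGraph (Fin m₁)) (completeGraph (Fin m₂))) =
      max m₁ m₂ := by
  set G := graphSum (completeGraph (Fin m₁)) (completeGraph (Fin m₂)) with hG
  -- the coloring witnessing the lower bound
  have hmem : max m₁ m₂ ∈ {k | ∃ c, IsCompleteColoring G c k} := by
    refine ⟨Sum.elim (fun a => (a : ℕ)) (fun b => (b : ℕ)), ?_, ?_, ?_⟩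
    · rintro (a | b)
      · exact lt_of_lt_of_le a.2 (le_max_left _ _)
      · exact lt_of_lt_of_le b.2 (le_max_right _ _)
    · intro i hi
      rcases lt_or_ge i m₁ with h | h
      · exact ⟨Sum.inl ⟨i, h⟩, rfl⟩
      · have : i < m₂ := by omega
        exact ⟨Sum.inr ⟨i, this⟩, rfl⟩
    · intro i j hi hj hij
      rcases le_total m₂ m₁ with h | h
      · have hi' : i < m₁ := by omega
        have hj' : j < m₁ := by omega
        refine ⟨Sum.inl ⟨i, hi'⟩, Sum.inl ⟨j, hj'⟩, ?_, rfl, rfl⟩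
        rw [graphSum_complete_adj]
        exact Or.inl ⟨_, _, rfl, rfl, fun h => hij (by simpa using congrArg Fin.val h)⟩
      · have hi' : i < m₂ := by omega
        have hj' : j < m₂ := by omega
        refine ⟨Sum.inr ⟨i, hi'⟩, Sum.inr ⟨j, hj'⟩, ?_, rfl, rfl⟩
        rw [graphSum_complete_adj]
        exact Or.inr ⟨_, _, rfl, rfl, fun h => hij (by simpa using congrArg Fin.val h)⟩
  -- the upper bound
  have hub : ∀ k ∈ {k | ∃ c, IsCompleteColoring G c k}, k ≤ max m₁ m₂ := by
    rintro k ⟨c, hlt, hsurj, hpair⟩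
    set S₁ : Finset ℕ := Finset.image (fun a : Fin m₁ => c (Sum.inl a)) Finset.univ with hS₁
    set S₂ : Finset ℕ := Finset.image (fun b : Fin m₂ => c (Sum.inr b)) Finset.univ with hS₂
    have key : (∀ i, i < k → i ∈ S₁) ∨ (∀ i, i < k → i ∈ S₂) := by
      by_contra hcon
      push_neg at hcon
      obtain ⟨⟨i, hik, hi1⟩, ⟨j, hjk, hj2⟩⟩ := hcon
      rcases eq_or_ne i j with rfl | hij
      · obtain ⟨v, hv⟩ := hsurj i hik
        cases v with
        | inl a => exact hi1 (Finset.mem_image.2 ⟨a, Finset.mem_univ _, hv⟩)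
        | inr b => exact hj2 (Finset.mem_image.2 ⟨b, Finset.mem_univ _, hv⟩)
      · obtain ⟨u, w, hadj, hcu, hcw⟩ := hpair i j hik hjk hij
        rw [graphSum_complete_adj] at hadj
        rcases hadj with ⟨a, b, ha, hb, _⟩ | ⟨a, b, ha, hb, _⟩
        · exact hi1 (Finset.mem_image.2 ⟨a, Finset.mem_univ _, by rw [← ha, hcu]⟩)
        · exact hj2 (Finset.mem_image.2 ⟨b, Finset.mem_univ _, by rw [← hb, hcw]⟩)
    rcases key with h | h
    · have hsub : Finset.range k ⊆ S₁ := fun i hi => h i (Finset.mem_range.1 hi)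
      have := Finset.card_le_card hsub
      have hcard : S₁.card ≤ m₁ := by
        calc S₁.card ≤ (Finset.univ : Finset (Fin m₁)).card := Finset.card_image_le
        _ = m₁ := by simp
      simp only [Finset.card_range] at this
      omega
    · have hsub : Finset.range k ⊆ S₂ := fun i hi => h i (Finset.mem_range.1 hi)
      have := Finset.card_le_card hsub
      have hcard : S₂.card ≤ m₂ := by
        calc S₂.card ≤ (Finset.univ : Finset (Fin m₂)).card := Finset.card_image_le
        _ = m₂ := by simp
      simp only [Finset.card_range] at this
      omega
  exact le_antisymm (csSup_le ⟨_, hmem⟩ hub) (le_csSup ⟨_, hub⟩ hmem)
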